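/- Let ρ be a cash-subadditive risk measure on X that is SSD-consistent, where SSD-consistency means ρ(X) ≥ ρ(Y) whenever E[(X−K)+] ≥ E[(Y−K)+] for all K ∈ ℝ. For Z ∈ X define ψ_Z(X) := ρ(Z + sup_{t∈[0,1]} (ES_t(X) − ES_t(Z))). Then ψ_Z is monotone, cash subadditive, law invariant and quasi-convex, and ρ(X) = min_{Z ∈ X} ψ_Z(X). -/

import Mathlib

open MeasureTheory

variable {Ω : Type*} [MeasurableSpace Ω]

noncomputable def cst (μ : Measure Ω) [IsFiniteMeasure μ] (c : ℝ) : Lp ℝ ⊤ μ :=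
  Lp.const ⊤ μ c

noncomputable def esssup (μ : Measure Ω) [IsFiniteMeasure μ] (X : Lp ℝ ⊤ μ) : ℝ :=
  sInf {c : ℝ | X ≤ cst μ c}

/-- Left `t`-quantile (Value-at-Risk) of a random variable. -/
noncomputable def VaRr (μ : Measure Ω) (t : ℝ) (X : Ω → ℝ) : ℝ :=
  sInf {y : ℝ | t ≤ (μ {ω | X ω ≤ y}).toReal}

/-- Expected Shortfall at level `t ∈ [0,1]`. -/
noncomputable def ES (μ : Measure Ω) [IsFiniteMeasure μ] (t : ℝ) (X : Lp ℝ ⊤ μ) : ℝ :=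
  if t < 1 then (1 / (1 - t)) * ∫ a in Set.Ioo t 1, VaRr μ a X else esssup μ X

set_option linter.unusedSectionVars false
set_option maxHeartbeats 1000000
section hidden_aux
open Set

namespace SSDaux

noncomputable def Fd (μ : Measure Ω) (f : Ω → ℝ) (y : ℝ) : ℝ :=
  (μ {ω | f ω ≤ y}).toReal

lemma VaRr_def (μ : Measure Ω) (t : ℝ) (f : Ω → ℝ) :
    VaRr μ t f = sInf {y : ℝ | t ≤ Fd μ f y} := rfl

variable {μ : Measure Ω} [IsProbabilityMeasure μ] {f : Ω → ℝ} {C : ℝ}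

lemma Fd_mono (f : Ω → ℝ) : Monotone (Fd μ f) := by
  intro a b hab
  exact ENNReal.toReal_mono (measure_ne_top _ _)
    (measure_mono fun ω h => le_trans h hab)

lemma Fd_nonneg (y : ℝ) : 0 ≤ Fd μ f y := ENNReal.toReal_nonneg

lemma Fd_le_one (y : ℝ) : Fd μ f y ≤ 1 := by
  have := prob_le_one (μ := μ) (s := {ω | f ω ≤ y})
  simpa [Fd] using ENNReal.toReal_mono (by simp) this

lemma Fd_eq_map (hf : AEMeasurable f μ) (y : ℝ) :
    Fd μ f y = ((Measure.map f μ) (Iic y)).toReal := by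
  rw [Fd, Measure.map_apply_of_aemeasurable hf measurableSet_Iic]
  rfl

lemma Fd_eq_one (hC : ∀ᵐ ω ∂μ, |f ω| ≤ C) {y : ℝ} (hy : C ≤ y) :
    Fd μ f y = 1 := by
  have h1 : μ {ω | f ω ≤ y} = 1 := by
    rw [← measure_univ (μ := μ)]
    apply measure_congr
    apply Filter.eventuallyEq_univ.2
    filter_upwards [hC] with ω hω
    exact le_trans (le_trans (le_abs_self _) hω) hy
  simp [Fd, h1]

lemma mem_S_lb (hC : ∀ᵐ ω ∂μ, |f ω| ≤ C) {t y : ℝ} (ht : 0 < t)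
    (hy : t ≤ Fd μ f y) : -C ≤ y := by
  by_contra h
  push_neg at h
  have hnull : μ {ω | f ω ≤ y} = 0 := by
    have hsub : {ω | f ω ≤ y} ⊆ {ω | ¬ |f ω| ≤ C} := by
      intro ω hω
      simp only [mem_setOf_eq] at hω ⊢
      intro habs
      have : -C ≤ f ω := neg_le_of_abs_le habs
      linarith
    exact measure_mono_null hsub (by simpa [ae_iff] using hC)
  rw [Fd, hnull] at hy
  simp at hy
  linarith

lemma bddBelow_S (hC : ∀ᵐ ω ∂μ, |f ω| ≤ C) {t : ℝ} (ht : 0 < t) :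
    BddBelow {y : ℝ | t ≤ Fd μ f y} :=
  ⟨-C, fun _ hy => mem_S_lb hC ht hy⟩

lemma C_mem_S (hC : ∀ᵐ ω ∂μ, |f ω| ≤ C) {t : ℝ} (ht : t ≤ 1) :
    C ∈ {y : ℝ | t ≤ Fd μ f y} := by
  simp only [mem_setOf_eq, Fd_eq_one hC le_rfl]
  exact ht

lemma VaRr_le_C (hC : ∀ᵐ ω ∂μ, |f ω| ≤ C) {t : ℝ} (ht : 0 < t) (ht1 : t ≤ 1) :
    VaRr μ t f ≤ C :=
  csInf_le (bddBelow_S hC ht) (C_mem_S hC ht1)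

lemma neg_C_le_VaRr (hC : ∀ᵐ ω ∂μ, |f ω| ≤ C) {t : ℝ} (ht : 0 < t) (ht1 : t ≤ 1) :
    -C ≤ VaRr μ t f :=
  le_csInf ⟨C, C_mem_S hC ht1⟩ fun _ hy => mem_S_lb hC ht hy

lemma le_Fd_of_forall_lt (hf : AEMeasurable f μ) {t y : ℝ}
    (h : ∀ ε > 0, t ≤ Fd μ f (y + ε)) : t ≤ Fd μ f y := by
  set ν := Measure.map f μ with hν
  haveI : IsProbabilityMeasure ν := Measure.isProbabilityMeasure_map hf
  have hseq : Filter.Tendsto (fun n : ℕ => ν (Iic (y + 1 / (n + 1)))) Filter.atTop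
      (nhds (ν (⋂ n : ℕ, Iic (y + 1 / (n + 1))))) := by
    apply tendsto_measure_iInter_atTop
    · exact fun n => measurableSet_Iic.nullMeasurableSet
    · intro n m hnm
      apply Iic_subset_Iic.2
      have : (1 : ℝ) / (m + 1) ≤ 1 / (n + 1) := by
        apply one_div_le_one_div_of_le (by positivity)
        linarith [(Nat.cast_le (α := ℝ)).2 hnm]
      linarith
    · exact ⟨0, measure_ne_top _ _⟩
  have hI : (⋂ n : ℕ, Iic (y + 1 / (n + 1))) = Iic y := by
    ext x
    simp only [mem_iInter, mem_Iic]
    constructor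
    · intro hx
      by_contra h'
      push_neg at h'
      obtain ⟨n, hn⟩ := exists_nat_one_div_lt (sub_pos.2 h')
      have := hx n
      push_cast at hn this
      linarith
    · intro hx n
      have : (0:ℝ) < 1 / (n + 1) := by positivity
      linarith
  rw [hI] at hseq
  have hle : ∀ n : ℕ, ENNReal.ofReal t ≤ ν (Iic (y + 1 / (n + 1))) := by
    intro n
    have hε : (0:ℝ) < 1 / (n + 1) := by positivity
    have := h _ hε
    rw [Fd_eq_map hf] at this
    calc ENNReal.ofReal t ≤ ENNReal.ofReal ((ν (Iic (y + 1 / (n + 1)))).toReal) :=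
          ENNReal.ofReal_le_ofReal this
      _ = ν (Iic (y + 1 / (n + 1))) := ENNReal.ofReal_toReal (measure_ne_top _ _)
  have hlim : ENNReal.ofReal t ≤ ν (Iic y) := ge_of_tendsto' hseq hle
  rw [Fd_eq_map hf]
  rcases le_or_gt t 0 with h0 | h0
  · exact le_trans h0 ENNReal.toReal_nonneg
  · have := ENNReal.toReal_mono (measure_ne_top _ _) hlim
    rwa [ENNReal.toReal_ofReal h0.le] at this

lemma VaRr_le_iff (hf : AEMeasurable f μ) (hC : ∀ᵐ ω ∂μ, |f ω| ≤ C)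
    {t y : ℝ} (ht : 0 < t) (ht1 : t ≤ 1) :
    VaRr μ t f ≤ y ↔ t ≤ Fd μ f y := by
  constructor
  · intro h
    apply le_Fd_of_forall_lt hf
    intro ε hε
    have hlt : sInf {y : ℝ | t ≤ Fd μ f y} < y + ε := lt_of_le_of_lt h (by linarith)
    obtain ⟨z, hz, hzlt⟩ := exists_lt_of_csInf_lt ⟨C, C_mem_S hC ht1⟩ hlt
    exact le_trans hz (Fd_mono f hzlt.le)
  · intro h
    exact csInf_le (bddBelow_S hC ht) h

lemma VaRr_monotoneOn (hC : ∀ᵐ ω ∂μ, |f ω| ≤ C) :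
    MonotoneOn (fun a => VaRr μ a f) (Ioc (0:ℝ) 1) := by
  intro a ha b hb hab
  apply csInf_le_csInf (bddBelow_S hC ha.1) ⟨C, C_mem_S hC hb.2⟩
  intro y hy
  exact le_trans hab hy
section B

variable {μ : Measure Ω} [IsProbabilityMeasure μ] {f : Ω → ℝ} {C : ℝ}

lemma prob_vol01 : IsProbabilityMeasure (volume.restrict (Ioo (0:ℝ) 1)) :=
  ⟨by rw [Measure.restrict_apply_univ]; simp [Real.volume_Ioo]⟩

lemma aemeas_VaRr (hC : ∀ᵐ ω ∂μ, |f ω| ≤ C) :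
    AEMeasurable (fun a => VaRr μ a f) (volume.restrict (Ioo (0:ℝ) 1)) :=
  aemeasurable_restrict_of_monotoneOn measurableSet_Ioo
    ((VaRr_monotoneOn hC).mono Ioo_subset_Ioc_self)

lemma map_VaRr (hf : AEMeasurable f μ) (hC : ∀ᵐ ω ∂μ, |f ω| ≤ C) :
    Measure.map (fun a => VaRr μ a f) (volume.restrict (Ioo (0:ℝ) 1))
      = Measure.map f μ := by
  haveI := prob_vol01
  have hqm : AEMeasurable (fun a => VaRr μ a f) (volume.restrict (Ioo (0:ℝ) 1)) :=
    aemeas_VaRr hC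
  haveI : IsProbabilityMeasure
      (Measure.map (fun a => VaRr μ a f) (volume.restrict (Ioo (0:ℝ) 1))) :=
    Measure.isProbabilityMeasure_map hqm
  haveI : IsProbabilityMeasure (Measure.map f μ) := Measure.isProbabilityMeasure_map hf
  apply Measure.ext_of_Iic
  intro y
  rw [Measure.map_apply_of_aemeasurable hqm measurableSet_Iic,
    Measure.restrict_apply₀ (hqm.nullMeasurable measurableSet_Iic)]
  have hset : (fun a => VaRr μ a f) ⁻¹' Iic y ∩ Ioo 0 1
      = Iic (Fd μ f y) ∩ Ioo 0 1 := by
    ext a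
    simp only [mem_inter_iff, mem_preimage, mem_Iic, mem_Ioo, and_congr_left_iff]
    intro ha
    rw [VaRr_le_iff hf hC ha.1 ha.2.le]
  rw [hset]
  have h0 : 0 ≤ Fd μ f y := Fd_nonneg y
  have h1 : Fd μ f y ≤ 1 := Fd_le_one y
  have hvol : volume (Iic (Fd μ f y) ∩ Ioo (0:ℝ) 1) = ENNReal.ofReal (Fd μ f y) := by
    rcases lt_or_eq_of_le h1 with h1' | h1'
    · have : Iic (Fd μ f y) ∩ Ioo (0:ℝ) 1 = Ioc 0 (Fd μ f y) := by
        ext a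
        simp only [mem_inter_iff, mem_Iic, mem_Ioo, mem_Ioc]
        constructor
        · rintro ⟨h, h', _⟩; exact ⟨h', h⟩
        · rintro ⟨h', h⟩; exact ⟨h, h', lt_of_le_of_lt h h1'⟩
      rw [this, Real.volume_Ioc, sub_zero]
    · have : Iic (Fd μ f y) ∩ Ioo (0:ℝ) 1 = Ioo 0 1 := by
        apply inter_eq_self_of_subset_right
        intro a ha
        rw [mem_Iic, h1']
        exact ha.2.le
      rw [this, Real.volume_Ioo, sub_zero, h1']
  rw [hvol, Measure.map_apply_of_aemeasurable hf measurableSet_Iic]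
  have : f ⁻¹' Iic y = {ω | f ω ≤ y} := rfl
  rw [this, ← ENNReal.ofReal_toReal (measure_ne_top μ {ω | f ω ≤ y})]
  rfl

lemma integral_VaRr (hf : AEMeasurable f μ) (hC : ∀ᵐ ω ∂μ, |f ω| ≤ C)
    {g : ℝ → ℝ} (hg : Measurable g) :
    ∫ ω, g (f ω) ∂μ = ∫ a in Ioo (0:ℝ) 1, g (VaRr μ a f) := by
  rw [← integral_map hf hg.aestronglyMeasurable, ← map_VaRr hf hC,
    integral_map (aemeas_VaRr hC) hg.aestronglyMeasurable]

lemma integrableOn_VaRr (hC : ∀ᵐ ω ∂μ, |f ω| ≤ C) {s : Set ℝ}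
    (hs : MeasurableSet s) (hsub : s ⊆ Ioo (0:ℝ) 1) :
    IntegrableOn (fun a => VaRr μ a f) s volume := by
  haveI : IsFiniteMeasure (volume.restrict s) := by
    constructor
    rw [Measure.restrict_apply_univ]
    exact lt_of_le_of_lt (measure_mono hsub) (by simp [Real.volume_Ioo])
  have hmeas : AEMeasurable (fun a => VaRr μ a f) (volume.restrict s) :=
    (aemeas_VaRr hC).mono_measure (Measure.restrict_mono hsub le_rfl)
  refine ⟨hmeas.aestronglyMeasurable, ?_⟩
  apply HasFiniteIntegral.of_bounded (C := C)
  rw [ae_restrict_iff' hs]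
  apply ae_of_all
  intro a ha
  have ha' := hsub ha
  rw [Real.norm_eq_abs, abs_le]
  exact ⟨neg_C_le_VaRr hC ha'.1 ha'.2.le, VaRr_le_C hC ha'.1 ha'.2.le⟩

end B
section C
variable {μ : Measure Ω} [IsProbabilityMeasure μ] {f : Ω → ℝ} {C : ℝ}

lemma measurable_posK (K : ℝ) : Measurable (fun x : ℝ => max (x - K) 0) :=
  ((continuous_id.sub continuous_const).max continuous_const).measurable

/-- the stop-loss transform as an integral of the quantile over `(F(K), 1)`. -/
lemma stop_loss_eq (hf : AEMeasurable f μ) (hC : ∀ᵐ ω ∂μ, |f ω| ≤ C) (K : ℝ) :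
    ∫ ω, max (f ω - K) 0 ∂μ
      = ∫ a in Ioo (Fd μ f K) 1, (VaRr μ a f - K) := by
  rw [integral_VaRr hf hC (measurable_posK K)]
  have hcong : ∀ a ∈ Ioo (0:ℝ) 1, max (VaRr μ a f - K) 0
      = (Ioi (Fd μ f K)).indicator (fun a => VaRr μ a f - K) a := by
    intro a ha
    rcases le_or_gt a (Fd μ f K) with h | h
    · have h1 : VaRr μ a f ≤ K := (VaRr_le_iff hf hC ha.1 ha.2.le).2 h
      rw [indicator_of_notMem (by simp only [mem_Ioi]; exact not_lt.2 h)]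
      exact max_eq_right (by linarith)
    · have h1 : ¬ VaRr μ a f ≤ K := by
        intro hle
        exact absurd ((VaRr_le_iff hf hC ha.1 ha.2.le).1 hle) (not_le.2 h)
      push_neg at h1
      rw [indicator_of_mem (mem_Ioi.2 h)]
      exact max_eq_left (by linarith)
  rw [setIntegral_congr_fun measurableSet_Ioo hcong,
    setIntegral_indicator measurableSet_Ioi]
  have hset : Ioo (0:ℝ) 1 ∩ Ioi (Fd μ f K) = Ioo (Fd μ f K) 1 := by
    ext a
    simp only [mem_inter_iff, mem_Ioo, mem_Ioi]
    constructor
    · rintro ⟨⟨_, h2⟩, h3⟩; exact ⟨h3, h2⟩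
    · rintro ⟨h1, h2⟩; exact ⟨⟨lt_of_le_of_lt (Fd_nonneg K) h1, h2⟩, h1⟩
  rw [hset]

end C
section D
variable {μ : Measure Ω} [IsProbabilityMeasure μ]

lemma bddae (X : Lp ℝ ⊤ μ) : ∃ C : ℝ, 0 ≤ C ∧ ∀ᵐ ω ∂μ, |X ω| ≤ C := by
  refine ⟨(eLpNorm (⇑X) ⊤ μ).toReal, ENNReal.toReal_nonneg, ?_⟩
  have hfin : eLpNormEssSup (⇑X) μ ≠ ⊤ := by
    have := Lp.eLpNorm_ne_top X
    rwa [eLpNorm_exponent_top] at this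
  filter_upwards [ae_le_eLpNormEssSup (f := ⇑X) (μ := μ)] with ω hω
  have h2 := ENNReal.toReal_mono hfin hω
  rw [eLpNorm_exponent_top]
  simpa [Real.norm_eq_abs] using h2

lemma integrable_Lp (X : Lp ℝ ⊤ μ) : Integrable (⇑X) μ :=
  (Lp.memLp X).integrable le_top

lemma integrable_pos_part (X : Lp ℝ ⊤ μ) (K : ℝ) :
    Integrable (fun ω => max (X ω - K) 0) μ :=
  ((integrable_Lp X).sub (integrable_const K)).pos_part

lemma coeFn_cst (c : ℝ) : ⇑(cst μ c) =ᵐ[μ] fun _ => c := Lp.coeFn_const ⊤ μ c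

lemma le_cst_iff (X : Lp ℝ ⊤ μ) (c : ℝ) :
    X ≤ cst μ c ↔ ∀ᵐ ω ∂μ, X ω ≤ c := by
  rw [← Lp.coeFn_le]
  constructor
  · intro h
    filter_upwards [h, coeFn_cst (μ := μ) c] with ω h1 h2
    rwa [h2] at h1
  · intro h
    filter_upwards [h, coeFn_cst (μ := μ) c] with ω h1 h2
    rwa [h2]

lemma cst_le_cst {a b : ℝ} (h : a ≤ b) : cst μ a ≤ cst μ b := by
  rw [← Lp.coeFn_le]
  filter_upwards [coeFn_cst (μ := μ) a, coeFn_cst (μ := μ) b] with ω h1 h2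
  rw [h1, h2]; exact h

lemma cst_add (a b : ℝ) : cst μ (a + b) = cst μ a + cst μ b :=
  map_add (Lp.const ⊤ μ) a b

lemma cst_zero : cst μ (0 : ℝ) = 0 := map_zero (Lp.const ⊤ μ)

lemma coe_add_cst (X : Lp ℝ ⊤ μ) (m : ℝ) :
    ⇑(X + cst μ m) =ᵐ[μ] fun ω => X ω + m := by
  filter_upwards [Lp.coeFn_add X (cst μ m), coeFn_cst (μ := μ) m] with ω h1 h2
  rw [h1]; simp [h2]

lemma mem_esssup_set (X : Lp ℝ ⊤ μ) {C : ℝ} (hC : ∀ᵐ ω ∂μ, |X ω| ≤ C) :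
    C ∈ {c : ℝ | X ≤ cst μ c} := by
  rw [mem_setOf_eq, le_cst_iff]
  filter_upwards [hC] with ω hω
  exact le_trans (le_abs_self _) hω

lemma esssup_set_lb (X : Lp ℝ ⊤ μ) {C : ℝ} (hC : ∀ᵐ ω ∂μ, |X ω| ≤ C)
    {c : ℝ} (hc : c ∈ {c : ℝ | X ≤ cst μ c}) : -C ≤ c := by
  rw [mem_setOf_eq, le_cst_iff] at hc
  have hae : ∀ᵐ ω ∂μ, -C ≤ X ω ∧ X ω ≤ c := by
    filter_upwards [hC, hc] with ω h1 h2
    exact ⟨neg_le_of_abs_le h1, h2⟩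
  haveI : (ae μ).NeBot := ae_neBot.2 (IsProbabilityMeasure.ne_zero μ)
  obtain ⟨ω, h1, h2⟩ := hae.exists
  linarith

lemma esssup_set_bddBelow (X : Lp ℝ ⊤ μ) {C : ℝ} (hC : ∀ᵐ ω ∂μ, |X ω| ≤ C) :
    BddBelow {c : ℝ | X ≤ cst μ c} :=
  ⟨-C, fun _ hc => esssup_set_lb X hC hc⟩

lemma esssup_le (X : Lp ℝ ⊤ μ) {C : ℝ} (hC : ∀ᵐ ω ∂μ, |X ω| ≤ C) :
    esssup μ X ≤ C :=
  csInf_le (esssup_set_bddBelow X hC) (mem_esssup_set X hC)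

lemma le_esssup (X : Lp ℝ ⊤ μ) {C : ℝ} (hC : ∀ᵐ ω ∂μ, |X ω| ≤ C) :
    -C ≤ esssup μ X :=
  le_csInf ⟨C, mem_esssup_set X hC⟩ (fun _ hc => esssup_set_lb X hC hc)

lemma ae_le_esssup (X : Lp ℝ ⊤ μ) : ∀ᵐ ω ∂μ, X ω ≤ esssup μ X := by
  obtain ⟨C, _, hC⟩ := bddae X
  have key : ∀ n : ℕ, ∀ᵐ ω ∂μ, X ω ≤ esssup μ X + 1 / (n + 1) := by
    intro n
    have hlt : sInf {c : ℝ | X ≤ cst μ c} < esssup μ X + 1 / (n + 1) := by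
      have : (0:ℝ) < 1 / (n+1) := by positivity
      rw [esssup] at *
      linarith
    obtain ⟨c, hc, hclt⟩ := exists_lt_of_csInf_lt ⟨C, mem_esssup_set X hC⟩ hlt
    rw [mem_setOf_eq, le_cst_iff] at hc
    filter_upwards [hc] with ω hω
    linarith
  rw [← ae_all_iff] at key
  filter_upwards [key] with ω hω
  by_contra h
  push_neg at h
  obtain ⟨n, hn⟩ := exists_nat_one_div_lt (sub_pos.2 h)
  have := hω n
  push_cast at hn this
  linarith

lemma le_cst_esssup (X : Lp ℝ ⊤ μ) : X ≤ cst μ (esssup μ X) :=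
  (le_cst_iff X _).2 (ae_le_esssup X)

end D
section E
variable {μ : Measure Ω} [IsProbabilityMeasure μ]

lemma aemeas_Lp (X : Lp ℝ ⊤ μ) : AEMeasurable (⇑X) μ :=
  (Lp.aestronglyMeasurable X).aemeasurable

lemma ES_mul (X : Lp ℝ ⊤ μ) {t : ℝ} (ht1 : t < 1) :
    (1 - t) * ES μ t X = ∫ a in Ioo t 1, VaRr μ a (⇑X) := by
  rw [ES, if_pos ht1]
  have h : (1:ℝ) - t ≠ 0 := by linarith
  field_simp

lemma vol_Ioo_toReal {t : ℝ} (ht1 : t ≤ 1) : volume.real (Ioo t 1) = 1 - t := by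
  rw [measureReal_def, Real.volume_Ioo, ENNReal.toReal_ofReal (by linarith)]

lemma ES_le (X : Lp ℝ ⊤ μ) {C t : ℝ} (hC : ∀ᵐ ω ∂μ, |X ω| ≤ C)
    (ht : 0 ≤ t) (ht1 : t ≤ 1) : ES μ t X ≤ C := by
  rcases lt_or_ge t 1 with h1 | h1
  · have hsub : Ioo t 1 ⊆ Ioo (0:ℝ) 1 := fun a ha => ⟨lt_of_le_of_lt ht ha.1, ha.2⟩
    have hint : ∫ a in Ioo t 1, VaRr μ a (⇑X) ≤ ∫ _a in Ioo t 1, C := by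
      apply setIntegral_mono_on (integrableOn_VaRr hC measurableSet_Ioo hsub)
        (integrableOn_const (by simp [Real.volume_Ioo])) measurableSet_Ioo
      intro a ha
      exact VaRr_le_C hC (hsub ha).1 (hsub ha).2.le
    rw [setIntegral_const, vol_Ioo_toReal h1.le, smul_eq_mul] at hint
    have h2 := ES_mul X h1
    nlinarith [sub_pos.2 h1]
  · have : t = 1 := le_antisymm ht1 h1
    rw [this, ES, if_neg (lt_irrefl 1)]
    exact esssup_le X hC

lemma le_ES (X : Lp ℝ ⊤ μ) {C t : ℝ} (hC : ∀ᵐ ω ∂μ, |X ω| ≤ C)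
    (ht : 0 ≤ t) (ht1 : t ≤ 1) : -C ≤ ES μ t X := by
  rcases lt_or_ge t 1 with h1 | h1
  · have hsub : Ioo t 1 ⊆ Ioo (0:ℝ) 1 := fun a ha => ⟨lt_of_le_of_lt ht ha.1, ha.2⟩
    have hint : ∫ _a in Ioo t 1, (-C) ≤ ∫ a in Ioo t 1, VaRr μ a (⇑X) := by
      apply setIntegral_mono_on (integrableOn_const (by simp [Real.volume_Ioo]))
        (integrableOn_VaRr hC measurableSet_Ioo hsub) measurableSet_Ioo
      intro a ha
      exact neg_C_le_VaRr hC (hsub ha).1 (hsub ha).2.le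
    rw [setIntegral_const, vol_Ioo_toReal h1.le, smul_eq_mul] at hint
    have h2 := ES_mul X h1
    nlinarith [sub_pos.2 h1]
  · have : t = 1 := le_antisymm ht1 h1
    rw [this, ES, if_neg (lt_irrefl 1)]
    exact le_esssup X hC

lemma ES_zero_eq (X : Lp ℝ ⊤ μ) : ES μ 0 X = ∫ ω, X ω ∂μ := by
  obtain ⟨C, _, hC⟩ := bddae X
  rw [ES, if_pos one_pos]
  have h := integral_VaRr (aemeas_Lp X) hC (g := id) measurable_id
  simp only [id] at h
  rw [← h]
  simp

/-- stop-loss in terms of ES : general inequality (Rockafellar–Uryasev upper bound). -/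
lemma ES_le_RU (X : Lp ℝ ⊤ μ) {C t : ℝ} (hC : ∀ᵐ ω ∂μ, |X ω| ≤ C)
    (ht : 0 ≤ t) (ht1 : t < 1) (K : ℝ) :
    (1 - t) * ES μ t X ≤ (1 - t) * K + ∫ ω, max (X ω - K) 0 ∂μ := by
  have hsub : Ioo t 1 ⊆ Ioo (0:ℝ) 1 := fun a ha => ⟨lt_of_le_of_lt ht ha.1, ha.2⟩
  have hq : IntegrableOn (fun a => VaRr μ a (⇑X)) (Ioo t 1) volume :=
    integrableOn_VaRr hC measurableSet_Ioo hsub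
  have hKint : IntegrableOn (fun _ : ℝ => K) (Ioo t 1) volume :=
    integrableOn_const (by simp [Real.volume_Ioo])
  have h1 : ∫ a in Ioo t 1, (VaRr μ a (⇑X) - K)
      = (1 - t) * ES μ t X - (1 - t) * K := by
    rw [integral_sub hq hKint, setIntegral_const, vol_Ioo_toReal ht1.le, smul_eq_mul,
      ES_mul X ht1]
  have h2 : ∫ a in Ioo t 1, (VaRr μ a (⇑X) - K)
      ≤ ∫ a in Ioo t 1, max (VaRr μ a (⇑X) - K) 0 := by
    apply integral_mono (hq.sub hKint) (hq.sub hKint).pos_part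
    intro a
    exact le_max_left _ _
  have h3 : ∫ a in Ioo t 1, max (VaRr μ a (⇑X) - K) 0
      ≤ ∫ a in Ioo (0:ℝ) 1, max (VaRr μ a (⇑X) - K) 0 := by
    apply setIntegral_mono_set
      ((integrableOn_VaRr hC measurableSet_Ioo (subset_refl _)).sub
        (integrableOn_const (by simp [Real.volume_Ioo]))).pos_part
      (ae_of_all _ fun a => le_max_right _ _)
      (HasSubset.Subset.eventuallyLE hsub)
  have h4 : ∫ a in Ioo (0:ℝ) 1, max (VaRr μ a (⇑X) - K) 0
      = ∫ ω, max (X ω - K) 0 ∂μ :=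
    (integral_VaRr (aemeas_Lp X) hC (measurable_posK K)).symm
  linarith

/-- Rockafellar–Uryasev equality at the `t`-quantile. -/
lemma ES_RU_eq (X : Lp ℝ ⊤ μ) {C t : ℝ} (hC : ∀ᵐ ω ∂μ, |X ω| ≤ C)
    (ht : 0 < t) (ht1 : t < 1) :
    (1 - t) * ES μ t X
      = (1 - t) * VaRr μ t (⇑X) + ∫ ω, max (X ω - VaRr μ t (⇑X)) 0 ∂μ := by
  set K := VaRr μ t (⇑X) with hK
  set ts := Fd μ (⇑X) K with hts
  have hf := aemeas_Lp X
  have htts : t ≤ ts := (VaRr_le_iff hf hC ht ht1.le).1 le_rfl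
  have hts1 : ts ≤ 1 := Fd_le_one K
  have hsl := stop_loss_eq hf hC K
  have hsub : Ioo t 1 ⊆ Ioo (0:ℝ) 1 := fun a ha => ⟨lt_trans ht ha.1, ha.2⟩
  have hq : IntegrableOn (fun a => VaRr μ a (⇑X)) (Ioo t 1) volume :=
    integrableOn_VaRr hC measurableSet_Ioo hsub
  have hKint : IntegrableOn (fun _ : ℝ => K) (Ioo t 1) volume :=
    integrableOn_const (by simp [Real.volume_Ioo])
  have hcong : ∀ a ∈ Ioo t 1, (VaRr μ a (⇑X) - K)
      = (Ioi ts).indicator (fun a => VaRr μ a (⇑X) - K) a := by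
    intro a ha
    rcases le_or_gt a ts with h | h
    · have h1 : VaRr μ a (⇑X) ≤ K :=
        (VaRr_le_iff hf hC (lt_trans ht ha.1) ha.2.le).2 h
      have h2 : K ≤ VaRr μ a (⇑X) :=
        VaRr_monotoneOn hC ⟨ht, ht1.le⟩ ⟨lt_trans ht ha.1, ha.2.le⟩ ha.1.le
      rw [indicator_of_notMem (by simp only [mem_Ioi]; exact not_lt.2 h)]
      linarith
    · rw [indicator_of_mem (mem_Ioi.2 h)]
  have hstep : ∫ a in Ioo t 1, (VaRr μ a (⇑X) - K)
      = ∫ a in Ioo ts 1, (VaRr μ a (⇑X) - K) := by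
    rw [setIntegral_congr_fun measurableSet_Ioo hcong,
      setIntegral_indicator measurableSet_Ioi]
    have hset : Ioo t 1 ∩ Ioi ts = Ioo ts 1 := by
      ext a
      simp only [mem_inter_iff, mem_Ioo, mem_Ioi]
      constructor
      · rintro ⟨⟨_, h2⟩, h3⟩; exact ⟨h3, h2⟩
      · rintro ⟨h1, h2⟩; exact ⟨⟨lt_of_le_of_lt htts h1, h2⟩, h1⟩
    rw [hset]
  have h1 : ∫ a in Ioo t 1, (VaRr μ a (⇑X) - K)
      = (1 - t) * ES μ t X - (1 - t) * K := by
    rw [integral_sub hq hKint, setIntegral_const, vol_Ioo_toReal ht1.le, smul_eq_mul,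
      ES_mul X ht1]
  rw [← hts] at hsl
  linarith [hsl, hstep, h1]

end E
section F
variable {μ : Measure Ω} [IsProbabilityMeasure μ]

lemma sInf_shift {S : Set ℝ} (hne : S.Nonempty) (hbd : BddBelow S) (m : ℝ) :
    sInf ((fun z => z + m) '' S) = sInf S + m := by
  have := (OrderIso.addRight m).map_csInf' hne hbd
  simpa using this.symm

lemma Fd_add_cst (X : Lp ℝ ⊤ μ) (m y : ℝ) :
    Fd μ (⇑(X + cst μ m)) y = Fd μ (⇑X) (y - m) := by
  unfold Fd
  congr 1
  apply measure_congr
  filter_upwards [coe_add_cst X m] with ω hω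
  have : ((X + cst μ m) ω ≤ y) ↔ (X ω ≤ y - m) := by
    rw [hω]; constructor <;> intro <;> linarith
  exact eq_iff_iff.2 this

lemma VaRr_add_cst (X : Lp ℝ ⊤ μ) {C t : ℝ} (hC : ∀ᵐ ω ∂μ, |X ω| ≤ C)
    (ht : 0 < t) (ht1 : t ≤ 1) (m : ℝ) :
    VaRr μ t (⇑(X + cst μ m)) = VaRr μ t (⇑X) + m := by
  rw [VaRr_def, VaRr_def]
  have hset : {y : ℝ | t ≤ Fd μ (⇑(X + cst μ m)) y}
      = (fun z => z + m) '' {y : ℝ | t ≤ Fd μ (⇑X) y} := by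
    ext y
    simp only [mem_setOf_eq, mem_image, Fd_add_cst X m]
    constructor
    · intro h; exact ⟨y - m, h, by ring⟩
    · rintro ⟨z, hz, rfl⟩; simpa using hz
  rw [hset, sInf_shift ⟨C, C_mem_S hC ht1⟩ (bddBelow_S hC ht)]

lemma esssup_add_cst (X : Lp ℝ ⊤ μ) (m : ℝ) :
    esssup μ (X + cst μ m) = esssup μ X + m := by
  obtain ⟨C, _, hC⟩ := bddae X
  rw [esssup, esssup]
  have hset : {c : ℝ | X + cst μ m ≤ cst μ c}
      = (fun z => z + m) '' {c : ℝ | X ≤ cst μ c} := by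
    ext c
    simp only [mem_setOf_eq, mem_image, le_cst_iff]
    constructor
    · intro h
      refine ⟨c - m, ?_, by ring⟩
      filter_upwards [h, coe_add_cst X m] with ω h1 h2
      rw [h2] at h1; linarith
    · rintro ⟨z, hz, rfl⟩
      filter_upwards [hz, coe_add_cst X m] with ω h1 h2
      rw [h2]; linarith
  rw [hset, sInf_shift ⟨C, mem_esssup_set X hC⟩ (esssup_set_bddBelow X hC)]

lemma ES_add_cst (X : Lp ℝ ⊤ μ) {t : ℝ} (ht : 0 ≤ t) (ht1 : t ≤ 1) (m : ℝ) :
    ES μ t (X + cst μ m) = ES μ t X + m := by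
  obtain ⟨C, _, hC⟩ := bddae X
  rcases lt_or_ge t 1 with h1 | h1
  · have hsub : Ioo t 1 ⊆ Ioo (0:ℝ) 1 := fun a ha => ⟨lt_of_le_of_lt ht ha.1, ha.2⟩
    have hcong : ∀ a ∈ Ioo t 1, VaRr μ a (⇑(X + cst μ m))
        = VaRr μ a (⇑X) + m := fun a ha =>
      VaRr_add_cst X hC (hsub ha).1 (hsub ha).2.le m
    have hne : (1:ℝ) - t ≠ 0 := by linarith
    have hq : IntegrableOn (fun a => VaRr μ a (⇑X)) (Ioo t 1) volume :=
      integrableOn_VaRr hC measurableSet_Ioo hsub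
    have : ∫ a in Ioo t 1, VaRr μ a (⇑(X + cst μ m))
        = (∫ a in Ioo t 1, VaRr μ a (⇑X)) + (1 - t) * m := by
      rw [setIntegral_congr_fun measurableSet_Ioo hcong, integral_add hq
        (integrableOn_const (by simp [Real.volume_Ioo]))]
      rw [setIntegral_const, vol_Ioo_toReal h1.le, smul_eq_mul]
    rw [ES, ES, if_pos h1, if_pos h1, this]
    field_simp
  · have ht1' : t = 1 := le_antisymm ht1 h1
    rw [ht1', ES, ES, if_neg (lt_irrefl 1), if_neg (lt_irrefl 1)]
    exact esssup_add_cst X m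

lemma Fd_mono_of_le {U V : Lp ℝ ⊤ μ} (h : U ≤ V) (y : ℝ) :
    Fd μ (⇑V) y ≤ Fd μ (⇑U) y := by
  rw [← Lp.coeFn_le] at h
  apply ENNReal.toReal_mono (measure_ne_top _ _)
  apply measure_mono_ae
  filter_upwards [h] with ω hω h2
  exact le_trans hω h2

lemma VaRr_mono_of_le {U V : Lp ℝ ⊤ μ} (h : U ≤ V) {CU CV t : ℝ}
    (hCU : ∀ᵐ ω ∂μ, |U ω| ≤ CU) (hCV : ∀ᵐ ω ∂μ, |V ω| ≤ CV)
    (ht : 0 < t) (ht1 : t ≤ 1) :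
    VaRr μ t (⇑U) ≤ VaRr μ t (⇑V) := by
  apply csInf_le_csInf (bddBelow_S hCU ht) ⟨CV, C_mem_S hCV ht1⟩
  intro y hy
  exact le_trans hy (Fd_mono_of_le h y)

lemma esssup_mono_of_le {U V : Lp ℝ ⊤ μ} (h : U ≤ V) :
    esssup μ U ≤ esssup μ V := by
  obtain ⟨CU, _, hCU⟩ := bddae U
  obtain ⟨CV, _, hCV⟩ := bddae V
  apply csInf_le_csInf (esssup_set_bddBelow U hCU) ⟨CV, mem_esssup_set V hCV⟩
  intro c hc
  exact le_trans h hc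

lemma ES_mono_of_le {U V : Lp ℝ ⊤ μ} (h : U ≤ V) {t : ℝ} (ht : 0 ≤ t) (ht1 : t ≤ 1) :
    ES μ t U ≤ ES μ t V := by
  obtain ⟨CU, _, hCU⟩ := bddae U
  obtain ⟨CV, _, hCV⟩ := bddae V
  rcases lt_or_ge t 1 with h1 | h1
  · have hsub : Ioo t 1 ⊆ Ioo (0:ℝ) 1 := fun a ha => ⟨lt_of_le_of_lt ht ha.1, ha.2⟩
    rw [ES, ES, if_pos h1, if_pos h1]
    have hint : ∫ a in Ioo t 1, VaRr μ a (⇑U) ≤ ∫ a in Ioo t 1, VaRr μ a (⇑V) := by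
      apply setIntegral_mono_on (integrableOn_VaRr hCU measurableSet_Ioo hsub)
        (integrableOn_VaRr hCV measurableSet_Ioo hsub) measurableSet_Ioo
      intro a ha
      exact VaRr_mono_of_le h hCU hCV (hsub ha).1 (hsub ha).2.le
    have hpos : (0:ℝ) < 1 / (1 - t) := by
      apply div_pos one_pos; linarith
    exact mul_le_mul_of_nonneg_left hint hpos.le
  · have ht1' : t = 1 := le_antisymm ht1 h1
    rw [ht1', ES, ES, if_neg (lt_irrefl 1), if_neg (lt_irrefl 1)]
    exact esssup_mono_of_le h

lemma Fd_eq_of_map_eq {U V : Lp ℝ ⊤ μ}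
    (h : Measure.map (⇑U) μ = Measure.map (⇑V) μ) (y : ℝ) :
    Fd μ (⇑U) y = Fd μ (⇑V) y := by
  rw [Fd_eq_map (aemeas_Lp U), Fd_eq_map (aemeas_Lp V), h]

lemma le_cst_iff_map (X : Lp ℝ ⊤ μ) (c : ℝ) :
    X ≤ cst μ c ↔ Measure.map (⇑X) μ (Ioi c) = 0 := by
  rw [le_cst_iff, Measure.map_apply_of_aemeasurable (aemeas_Lp X) measurableSet_Ioi,
    ae_iff]
  have hs : {ω | ¬ X ω ≤ c} = ⇑X ⁻¹' Ioi c := by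
    ext ω; simp [not_le, mem_preimage]
  rw [hs]

lemma esssup_eq_of_map_eq {U V : Lp ℝ ⊤ μ}
    (h : Measure.map (⇑U) μ = Measure.map (⇑V) μ) :
    esssup μ U = esssup μ V := by
  rw [esssup, esssup]
  congr 1
  ext c
  simp only [mem_setOf_eq, le_cst_iff_map, h]

lemma ES_eq_of_map_eq {U V : Lp ℝ ⊤ μ}
    (h : Measure.map (⇑U) μ = Measure.map (⇑V) μ) (t : ℝ) :
    ES μ t U = ES μ t V := by
  rcases lt_or_ge t 1 with h1 | h1
  · rw [ES, ES, if_pos h1, if_pos h1]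
    congr 1
    apply setIntegral_congr_fun measurableSet_Ioo
    intro a _
    show VaRr μ a (⇑U) = VaRr μ a (⇑V)
    rw [VaRr_def, VaRr_def]
    congr 1
    ext y
    simp only [mem_setOf_eq]
    rw [Fd_eq_of_map_eq h y]
  · rw [ES, ES, if_neg (not_lt.2 h1), if_neg (not_lt.2 h1)]
    exact esssup_eq_of_map_eq h

end F
section G
variable {μ : Measure Ω} [IsProbabilityMeasure μ]

lemma coe_combo (U V : Lp ℝ ⊤ μ) (l : ℝ) :
    ⇑(l • U + (1 - l) • V) =ᵐ[μ] fun ω => l * U ω + (1 - l) * V ω := by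
  filter_upwards [Lp.coeFn_add (l • U) ((1 - l) • V), Lp.coeFn_smul l U,
    Lp.coeFn_smul (1 - l) V] with ω h1 h2 h3
  rw [h1]
  simp only [Pi.add_apply, h2, h3, Pi.smul_apply, smul_eq_mul]

lemma ES_convex (U V : Lp ℝ ⊤ μ) {l t : ℝ} (hl : 0 ≤ l) (hl1 : l ≤ 1)
    (ht : 0 ≤ t) (ht1 : t ≤ 1) :
    ES μ t (l • U + (1 - l) • V) ≤ l * ES μ t U + (1 - l) * ES μ t V := by
  set W := l • U + (1 - l) • V with hW
  obtain ⟨CU, hCU0, hCU⟩ := bddae U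
  obtain ⟨CV, hCV0, hCV⟩ := bddae V
  obtain ⟨CW, hCW0, hCW⟩ := bddae W
  rcases lt_or_ge t 1 with hlt | hge
  swap
  · -- t = 1 : essential supremum is convex
    have ht1' : t = 1 := le_antisymm ht1 hge
    rw [ht1', ES, ES, ES, if_neg (lt_irrefl 1), if_neg (lt_irrefl 1),
      if_neg (lt_irrefl 1)]
    apply csInf_le (esssup_set_bddBelow W hCW)
    rw [mem_setOf_eq, le_cst_iff]
    filter_upwards [coe_combo U V l, ae_le_esssup U, ae_le_esssup V] with ω h1 h2 h3
    rw [h1]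
    have := mul_le_mul_of_nonneg_left h2 hl
    have := mul_le_mul_of_nonneg_left h3 (by linarith : (0:ℝ) ≤ 1 - l)
    linarith
  rcases eq_or_lt_of_le ht with ht0 | ht0
  · -- t = 0 : expectation is linear
    rw [← ht0, ES_zero_eq, ES_zero_eq, ES_zero_eq]
    rw [integral_congr_ae (coe_combo U V l)]
    rw [integral_add ((integrable_Lp U).const_mul l)
      ((integrable_Lp V).const_mul (1 - l)), integral_const_mul, integral_const_mul]
  · -- 0 < t < 1 : Rockafellar–Uryasev
    set KU := VaRr μ t (⇑U) with hKU
    set KV := VaRr μ t (⇑V) with hKV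
    set K := l * KU + (1 - l) * KV with hK
    have hU := ES_RU_eq U hCU ht0 hlt
    have hV := ES_RU_eq V hCV ht0 hlt
    have hWle := ES_le_RU W hCW ht0.le hlt K
    have hptw : ∀ᵐ ω ∂μ, max (W ω - K) 0
        ≤ l * max (U ω - KU) 0 + (1 - l) * max (V ω - KV) 0 := by
      filter_upwards [coe_combo U V l] with ω h1
      have e1 : l * (U ω - KU) ≤ l * max (U ω - KU) 0 :=
        mul_le_mul_of_nonneg_left (le_max_left _ _) hl
      have e2 : (1 - l) * (V ω - KV) ≤ (1 - l) * max (V ω - KV) 0 :=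
        mul_le_mul_of_nonneg_left (le_max_left _ _) (by linarith)
      have e3 : (0:ℝ) ≤ l * max (U ω - KU) 0 + (1 - l) * max (V ω - KV) 0 :=
        add_nonneg (mul_nonneg hl (le_max_right _ _))
          (mul_nonneg (by linarith) (le_max_right _ _))
      apply max_le _ e3
      rw [h1, hK]
      linarith
    have hI : ∫ ω, max (W ω - K) 0 ∂μ
        ≤ l * (∫ ω, max (U ω - KU) 0 ∂μ) + (1 - l) * ∫ ω, max (V ω - KV) 0 ∂μ := by
      have := integral_mono_ae (integrable_pos_part W K)
        (((integrable_pos_part U KU).const_mul l).add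
          ((integrable_pos_part V KV).const_mul (1 - l))) hptw
      simp only [Pi.add_apply] at this
      rwa [integral_add ((integrable_pos_part U KU).const_mul l)
        ((integrable_pos_part V KV).const_mul (1 - l)), integral_const_mul,
        integral_const_mul] at this
    have hfin : (1 - t) * ES μ t W
        ≤ (1 - t) * (l * ES μ t U + (1 - l) * ES μ t V) := by
      nlinarith
    have hpos : (0:ℝ) < 1 - t := by linarith
    exact le_of_mul_le_mul_left (by linarith [hfin]) hpos

end G
section H
variable {μ : Measure Ω} [IsProbabilityMeasure μ]

lemma stop_loss_ES (X : Lp ℝ ⊤ μ) {C : ℝ} (hC : ∀ᵐ ω ∂μ, |X ω| ≤ C) {K : ℝ}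
    (h : Fd μ (⇑X) K < 1) :
    ∫ ω, max (X ω - K) 0 ∂μ
      = (1 - Fd μ (⇑X) K) * ES μ (Fd μ (⇑X) K) X - (1 - Fd μ (⇑X) K) * K := by
  set t := Fd μ (⇑X) K with hts
  have ht : 0 ≤ t := Fd_nonneg K
  have hsub : Ioo t 1 ⊆ Ioo (0:ℝ) 1 := fun a ha => ⟨lt_of_le_of_lt ht ha.1, ha.2⟩
  have hq : IntegrableOn (fun a => VaRr μ a (⇑X)) (Ioo t 1) volume :=
    integrableOn_VaRr hC measurableSet_Ioo hsub
  have hKint : IntegrableOn (fun _ : ℝ => K) (Ioo t 1) volume :=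
    integrableOn_const (by simp [Real.volume_Ioo])
  rw [stop_loss_eq (aemeas_Lp X) hC K, ← hts, integral_sub hq hKint,
    setIntegral_const, vol_Ioo_toReal h.le, smul_eq_mul, ES_mul X h]

lemma stop_loss_zero (X : Lp ℝ ⊤ μ) {C : ℝ} (hC : ∀ᵐ ω ∂μ, |X ω| ≤ C) {K : ℝ}
    (h : 1 ≤ Fd μ (⇑X) K) :
    ∫ ω, max (X ω - K) 0 ∂μ = 0 := by
  rw [stop_loss_eq (aemeas_Lp X) hC K, Ioo_eq_empty (by linarith : ¬ Fd μ (⇑X) K < 1),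
    Measure.restrict_empty, integral_zero_measure]

end H
end SSDaux

end hidden_aux

/-- `ψ_Z(X) = ρ(Z + sup_{t ∈ [0,1]} (ES_t(X) − ES_t(Z)))`. -/
noncomputable def psiZ (μ : Measure Ω) [IsFiniteMeasure μ]
    (ρ : Lp ℝ ⊤ μ → ℝ) (Z X : Lp ℝ ⊤ μ) : ℝ :=
  ρ (Z + cst μ (sSup {d : ℝ | ∃ t ∈ Set.Icc (0 : ℝ) 1, d = ES μ t X - ES μ t Z}))


section Maux
open SSDaux

section M
open SSDaux

variable {μ : Measure Ω} [IsProbabilityMeasure μ]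

lemma D_nonempty (Z X : Lp ℝ ⊤ μ) :
    {d : ℝ | ∃ t ∈ Set.Icc (0 : ℝ) 1, d = ES μ t X - ES μ t Z}.Nonempty :=
  ⟨ES μ 0 X - ES μ 0 Z, 0, ⟨le_rfl, zero_le_one⟩, rfl⟩

lemma D_bddAbove (Z X : Lp ℝ ⊤ μ) :
    BddAbove {d : ℝ | ∃ t ∈ Set.Icc (0 : ℝ) 1, d = ES μ t X - ES μ t Z} := by
  obtain ⟨CX, _, hCX⟩ := bddae X
  obtain ⟨CZ, _, hCZ⟩ := bddae Z
  refine ⟨CX + CZ, ?_⟩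
  rintro d ⟨t, ht, rfl⟩
  have h1 := ES_le X hCX ht.1 ht.2
  have h2 := le_ES Z hCZ ht.1 ht.2
  linarith

lemma rho_le_psiZ (ρ : Lp ℝ ⊤ μ → ℝ)
    (hssd : ∀ U V : Lp ℝ ⊤ μ,
      (∀ K : ℝ, ∫ ω, max (V ω - K) 0 ∂μ ≤ ∫ ω, max (U ω - K) 0 ∂μ) → ρ V ≤ ρ U)
    (X Z : Lp ℝ ⊤ μ) : ρ X ≤ psiZ μ ρ Z X := by
  set D := {d : ℝ | ∃ t ∈ Set.Icc (0 : ℝ) 1, d = ES μ t X - ES μ t Z} with hD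
  set s := sSup D with hs
  obtain ⟨CX, _, hCX⟩ := bddae X
  obtain ⟨CZ, _, hCZ⟩ := bddae Z
  have hES : ∀ t ∈ Set.Icc (0:ℝ) 1, ES μ t X ≤ ES μ t Z + s := by
    intro t ht
    have := le_csSup (D_bddAbove Z X) (show ES μ t X - ES μ t Z ∈ D from ⟨t, ht, rfl⟩)
    linarith
  apply hssd (Z + cst μ s) X
  intro K
  have hRHS : ∫ ω, max ((Z + cst μ s) ω - K) 0 ∂μ
      = ∫ ω, max (Z ω - (K - s)) 0 ∂μ := by
    apply integral_congr_ae
    filter_upwards [coe_add_cst Z s] with ω hω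
    rw [hω]
    congr 1
    ring
  rw [hRHS]
  rcases lt_or_ge (Fd μ (⇑X) K) 1 with h1 | h1
  · set ts := Fd μ (⇑X) K with hts
    have hts0 : 0 ≤ ts := Fd_nonneg K
    have hstep := stop_loss_ES X hCX h1
    have hES' := hES ts ⟨hts0, h1.le⟩
    have hRU := ES_le_RU Z hCZ hts0 h1 (K - s)
    have hpos : (0:ℝ) ≤ 1 - ts := by linarith
    calc ∫ ω, max (X ω - K) 0 ∂μ
        = (1 - ts) * ES μ ts X - (1 - ts) * K := hstep
      _ ≤ (1 - ts) * (ES μ ts Z + s) - (1 - ts) * K := by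
          apply sub_le_sub_right
          exact mul_le_mul_of_nonneg_left hES' hpos
      _ = (1 - ts) * ES μ ts Z - (1 - ts) * (K - s) := by ring
      _ ≤ ∫ ω, max (Z ω - (K - s)) 0 ∂μ := by linarith
  · rw [stop_loss_zero X hCX h1]
    exact integral_nonneg fun ω => le_max_right _ _

end M

end Maux

section MAIN
open SSDaux

/-- For an SSD-consistent cash-subadditive risk measure `ρ` on an atomless
probability space, each `ψ_Z` is monotone, cash subadditive, law invariant and
quasi-convex, and `ρ(X) = min_Z ψ_Z(X)` (attained at `Z = X`). -/
theorem ssdConsistent_repr (μ : Measure Ω) [IsProbabilityMeasure μ] [NullSingletonClass μ]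
    (ρ : Lp ℝ ⊤ μ → ℝ)
    (hmono : ∀ U V : Lp ℝ ⊤ μ, U ≤ V → ρ U ≤ ρ V)
    (hcs : ∀ (U : Lp ℝ ⊤ μ) (m : ℝ), 0 ≤ m → ρ (U + cst μ m) ≤ ρ U + m)
    (hssd : ∀ U V : Lp ℝ ⊤ μ,
      (∀ K : ℝ, ∫ ω, max (V ω - K) 0 ∂μ ≤ ∫ ω, max (U ω - K) 0 ∂μ) → ρ V ≤ ρ U) :
    (∀ Z : Lp ℝ ⊤ μ,
      (∀ U V : Lp ℝ ⊤ μ, U ≤ V → psiZ μ ρ Z U ≤ psiZ μ ρ Z V) ∧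
      (∀ (U : Lp ℝ ⊤ μ) (m : ℝ), 0 ≤ m → psiZ μ ρ Z (U + cst μ m) ≤ psiZ μ ρ Z U + m) ∧
      (∀ U V : Lp ℝ ⊤ μ, Measure.map (⇑U) μ = Measure.map (⇑V) μ →
        psiZ μ ρ Z U = psiZ μ ρ Z V) ∧
      (∀ (U V : Lp ℝ ⊤ μ) (l : ℝ), 0 ≤ l → l ≤ 1 →
        psiZ μ ρ Z (l • U + (1 - l) • V) ≤ max (psiZ μ ρ Z U) (psiZ μ ρ Z V))) ∧
    (∀ X : Lp ℝ ⊤ μ, psiZ μ ρ X X = ρ X ∧ ∀ Z : Lp ℝ ⊤ μ, ρ X ≤ psiZ μ ρ Z X) := by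
  constructor
  · intro Z
    refine ⟨?_, ?_, ?_, ?_⟩
    · -- monotone
      intro U V hUV
      apply hmono
      apply add_le_add_right
      apply cst_le_cst
      apply csSup_le (D_nonempty Z U)
      rintro d ⟨t, ht, rfl⟩
      have h1 : ES μ t U ≤ ES μ t V := ES_mono_of_le hUV ht.1 ht.2
      have h2 := le_csSup (D_bddAbove Z V)
        (show ES μ t V - ES μ t Z ∈ _ from ⟨t, ht, rfl⟩)
      linarith
    · -- cash subadditive
      intro U m hm
      have hsup : sSup {d : ℝ | ∃ t ∈ Set.Icc (0:ℝ) 1,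
            d = ES μ t (U + cst μ m) - ES μ t Z}
          ≤ sSup {d : ℝ | ∃ t ∈ Set.Icc (0:ℝ) 1, d = ES μ t U - ES μ t Z} + m := by
        apply csSup_le (D_nonempty Z (U + cst μ m))
        rintro d ⟨t, ht, rfl⟩
        rw [ES_add_cst U ht.1 ht.2 m]
        have h2 := le_csSup (D_bddAbove Z U)
          (show ES μ t U - ES μ t Z ∈ _ from ⟨t, ht, rfl⟩)
        linarith
      calc psiZ μ ρ Z (U + cst μ m)
          ≤ ρ (Z + cst μ (sSup {d : ℝ | ∃ t ∈ Set.Icc (0:ℝ) 1,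
              d = ES μ t U - ES μ t Z} + m)) :=
            hmono _ _ (add_le_add_right (cst_le_cst hsup) Z)
        _ = ρ ((Z + cst μ (sSup {d : ℝ | ∃ t ∈ Set.Icc (0:ℝ) 1,
              d = ES μ t U - ES μ t Z})) + cst μ m) := by
            rw [cst_add, add_assoc]
        _ ≤ psiZ μ ρ Z U + m := hcs _ m hm
    · -- law invariant
      intro U V hmap
      have hset : {d : ℝ | ∃ t ∈ Set.Icc (0:ℝ) 1, d = ES μ t U - ES μ t Z}
          = {d : ℝ | ∃ t ∈ Set.Icc (0:ℝ) 1, d = ES μ t V - ES μ t Z} := by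
        ext d
        simp only [Set.mem_setOf_eq]
        constructor
        · rintro ⟨t, ht, rfl⟩
          exact ⟨t, ht, by rw [ES_eq_of_map_eq hmap t]⟩
        · rintro ⟨t, ht, rfl⟩
          exact ⟨t, ht, by rw [ES_eq_of_map_eq hmap t]⟩
      unfold psiZ
      rw [hset]
    · -- quasi-convex
      intro U V l hl hl1
      set sU := sSup {d : ℝ | ∃ t ∈ Set.Icc (0:ℝ) 1, d = ES μ t U - ES μ t Z} with hsU
      set sV := sSup {d : ℝ | ∃ t ∈ Set.Icc (0:ℝ) 1, d = ES μ t V - ES μ t Z} with hsV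
      have hsup : sSup {d : ℝ | ∃ t ∈ Set.Icc (0:ℝ) 1,
            d = ES μ t (l • U + (1 - l) • V) - ES μ t Z} ≤ max sU sV := by
        apply csSup_le (D_nonempty Z _)
        rintro d ⟨t, ht, rfl⟩
        have hcx := ES_convex U V hl hl1 ht.1 ht.2
        have hU := le_csSup (D_bddAbove Z U)
          (show ES μ t U - ES μ t Z ∈ _ from ⟨t, ht, rfl⟩)
        have hV := le_csSup (D_bddAbove Z V)
          (show ES μ t V - ES μ t Z ∈ _ from ⟨t, ht, rfl⟩)
        rw [← hsU] at hU
        rw [← hsV] at hV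
        have h1 : sU ≤ max sU sV := le_max_left _ _
        have h2 : sV ≤ max sU sV := le_max_right _ _
        have hES : ES μ t (l • U + (1 - l) • V) - ES μ t Z
            ≤ l * (ES μ t U - ES μ t Z) + (1 - l) * (ES μ t V - ES μ t Z) := by
          nlinarith
        nlinarith
      have hle : psiZ μ ρ Z (l • U + (1 - l) • V) ≤ ρ (Z + cst μ (max sU sV)) :=
        hmono _ _ (add_le_add_right (cst_le_cst hsup) Z)
      rcases le_total sV sU with h | h
      · rw [max_eq_left h] at hle
        exact le_trans hle (le_max_left _ _)
      · rw [max_eq_right h] at hle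
        exact le_trans hle (le_max_right _ _)
  · intro X
    constructor
    · unfold psiZ
      have hset : {d : ℝ | ∃ t ∈ Set.Icc (0:ℝ) 1, d = ES μ t X - ES μ t X}
          = {(0:ℝ)} := by
        ext d
        simp only [Set.mem_setOf_eq, Set.mem_singleton_iff]
        constructor
        · rintro ⟨t, _, rfl⟩; ring
        · rintro rfl; exact ⟨0, ⟨le_rfl, zero_le_one⟩, by ring⟩
      rw [hset, csSup_singleton, cst_zero, add_zero]
    · intro Z
      exact rho_le_psiZ ρ hssd X Z

end MAIN
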